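/- Let A ∈ ℝ^{m×n}, b ∈ ℝᵐ, v ∈ ℝⁿ with v ≥ 0, β > 0, λ > 0 and x̄ ∈ ℝⁿ, and define Φ(y) = bᵀy + (1/(2β))‖y‖² + (1/(2λ))‖S_λ(x̄ − λAᵀy, v)‖² for y ∈ ℝᵐ, where S_λ(z, v)ᵢ = sign(zᵢ)·max{|zᵢ| − λvᵢ, 0}. Then Φ is a convex, continuously differentiable function on ℝᵐ with gradient ∇Φ(y) = b + β⁻¹y − A·S_λ(x̄ − λAᵀy, v), and the gradient mapping ∇Φ is Lipschitz continuous on ℝᵐ. -/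

import Mathlib

noncomputable def st (c t : ℝ) : ℝ := Real.sign t * max (|t| - c) 0

lemma st_eq {c : ℝ} (hc : 0 ≤ c) (t : ℝ) :
    st c t = max (t - c) 0 - max (-t - c) 0 := by
  unfold st
  rcases lt_trichotomy t 0 with h | h | h
  · rw [Real.sign_of_neg h, abs_of_neg h]
    have h1 : max (t - c) 0 = 0 := max_eq_right (by linarith)
    rw [h1]; ring_nf
  · subst h
    simp [Real.sign_zero, max_eq_right (by linarith : -(0:ℝ) - c ≤ 0),
      max_eq_right (by linarith : (0:ℝ) - c ≤ 0)]
  · rw [Real.sign_of_pos h, abs_of_pos h]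
    have h2 : max (-t - c) 0 = 0 := max_eq_right (by linarith)
    rw [h2]; ring

lemma st_eq_clamp {c : ℝ} (hc : 0 ≤ c) (t : ℝ) :
    st c t = t - max (min t c) (-c) := by
  rw [st_eq hc]
  rcases le_total t (-c) with h | h
  · rw [max_eq_right (by linarith : t - c ≤ 0), max_eq_left (by linarith : 0 ≤ -t - c),
      min_eq_left (by linarith), max_eq_right h]; ring
  rcases le_total t c with h2 | h2
  · rw [max_eq_right (by linarith : t - c ≤ 0), max_eq_right (by linarith : -t - c ≤ 0),
      min_eq_left h2, max_eq_left h]; ring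
  · rw [max_eq_left (by linarith : 0 ≤ t - c), max_eq_right (by linarith : -t - c ≤ 0),
      min_eq_right h2, max_eq_left (by linarith)]; ring

lemma st_lip {c : ℝ} (hc : 0 ≤ c) (a b : ℝ) : |st c a - st c b| ≤ |a - b| := by
  wlog hab : b ≤ a generalizing a b
  · rw [abs_sub_comm, abs_sub_comm a b]; exact this b a (le_of_not_ge hab)
  rw [st_eq_clamp hc, st_eq_clamp hc]
  have hm : max (min b c) (-c) ≤ max (min a c) (-c) :=
    max_le_max (min_le_min hab le_rfl) le_rfl
  have h1 : |max (min a c) (-c) - max (min b c) (-c)| ≤ |a - b| := by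
    refine le_trans (abs_max_sub_max_le_abs _ _ _) ?_
    refine le_trans (abs_min_sub_min_le_max a c b c) ?_
    simp
  have hab' : |a - b| = a - b := abs_of_nonneg (by linarith)
  rw [hab'] at h1
  rw [abs_of_nonneg (sub_nonneg.2 hm)] at h1
  rw [hab', abs_le]
  constructor <;> linarith

lemma st_sq_eq {c : ℝ} (hc : 0 ≤ c) (t : ℝ) :
    st c t ^ 2 = max (t - c) 0 ^ 2 + max (-t - c) 0 ^ 2 := by
  have hz : max (t - c) 0 * max (-t - c) 0 = 0 := by
    rcases le_total t (-c) with h | h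
    · rw [max_eq_right (by linarith : t - c ≤ 0), zero_mul]
    · rw [max_eq_right (by linarith : -t - c ≤ 0), mul_zero]
  rw [st_eq hc]; ring_nf; nlinarith [hz]

lemma relu_sq_deriv (x : ℝ) :
    HasDerivAt (fun t : ℝ => max t 0 ^ 2) (2 * max x 0) x := by
  rcases lt_trichotomy x 0 with h | h | h
  · have : (fun t : ℝ => max t 0 ^ 2) =ᶠ[nhds x] fun _ => (0:ℝ) := by
      filter_upwards [eventually_lt_nhds h] with t ht
      rw [max_eq_right ht.le]; norm_num
    rw [max_eq_right h.le, mul_zero]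
    exact (hasDerivAt_const x 0).congr_of_eventuallyEq this
  · subst h
    rw [max_self, mul_zero]
    rw [hasDerivAt_iff_isLittleO]
    rw [Asymptotics.isLittleO_iff]
    intro ε hε
    rw [Metric.eventually_nhds_iff]
    refine ⟨ε, hε, fun {t} ht => ?_⟩
    simp only [Real.dist_eq, sub_zero] at ht ⊢
    have h1 : |max t 0 ^ 2| ≤ t ^ 2 := by
      rw [abs_of_nonneg (by positivity)]
      rcases le_total t 0 with h2 | h2
      · rw [max_eq_right h2]; simpa using sq_nonneg t
      · rw [max_eq_left h2]
    simp only [max_self, smul_zero, sub_zero, Real.norm_eq_abs]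
    calc |max t 0 ^ 2 - 0 ^ 2| = |max t 0 ^ 2| := by norm_num
      _ ≤ t ^ 2 := h1
      _ = |t| * |t| := by rw [← abs_mul, sq, abs_mul_self]
      _ ≤ ε * |t| := by nlinarith [abs_nonneg t]
  · have : (fun t : ℝ => max t 0 ^ 2) =ᶠ[nhds x] fun t => t ^ 2 := by
      filter_upwards [eventually_gt_nhds h] with t ht
      rw [max_eq_left ht.le]
    rw [max_eq_left h.le]
    have h2 : HasDerivAt (fun t : ℝ => t ^ 2) (2 * x) x := by
      simpa using hasDerivAt_pow 2 x
    exact h2.congr_of_eventuallyEq this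

lemma st_sq_deriv {c : ℝ} (hc : 0 ≤ c) (t : ℝ) :
    HasDerivAt (fun s : ℝ => st c s ^ 2) (2 * st c t) t := by
  have h1 : HasDerivAt (fun s : ℝ => max (s - c) 0 ^ 2) (2 * max (t - c) 0) t := by
    have := (relu_sq_deriv (t - c)).comp t ((hasDerivAt_id t).sub_const c)
    simpa [Function.comp_def] using this
  have h2 : HasDerivAt (fun s : ℝ => max (-s - c) 0 ^ 2) (2 * max (-t - c) 0 * (-1)) t := by
    have hi : HasDerivAt (fun s : ℝ => -s - c) (-1) t := by
      simpa using ((hasDerivAt_id t).neg.sub_const c)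
    exact (relu_sq_deriv (-t - c)).comp t hi
  have h3 := h1.add h2
  have he : (fun s : ℝ => st c s ^ 2)
      = fun s => max (s - c) 0 ^ 2 + max (-s - c) 0 ^ 2 := funext (st_sq_eq hc)
  rw [he, st_eq hc]
  exact h3.congr_deriv (by ring)

lemma st_sq_convex {c : ℝ} (hc : 0 ≤ c) :
    ConvexOn ℝ Set.univ (fun t : ℝ => st c t ^ 2) := by
  have hrelu : ConvexOn ℝ Set.univ (fun t : ℝ => max t 0 ^ 2) := by
    refine ⟨convex_univ, fun x _ y _ a b ha hb hab => ?_⟩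
    simp only [smul_eq_mul]
    have h1 : max (a * x + b * y) 0 ≤ a * max x 0 + b * max y 0 := by
      apply max_le
      · have := mul_le_mul_of_nonneg_left (le_max_left x 0) ha
        have := mul_le_mul_of_nonneg_left (le_max_left y 0) hb
        linarith
      · positivity
    have h2 : (0:ℝ) ≤ max (a * x + b * y) 0 := le_max_right _ _
    nlinarith [sq_nonneg (max x 0 - max y 0), mul_nonneg ha hb,
      le_max_right x 0, le_max_right y 0]
  have he : (fun t : ℝ => st c t ^ 2)
      = fun t => max (t - c) 0 ^ 2 + max (-t - c) 0 ^ 2 := funext (st_sq_eq hc)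
  rw [he]
  have c1 : ConvexOn ℝ Set.univ (fun t : ℝ => max (t - c) 0 ^ 2) := by
    have := hrelu.comp_affineMap (AffineMap.id ℝ ℝ - AffineMap.const ℝ ℝ c)
    simpa [Function.comp_def, Pi.sub_apply, Pi.neg_apply] using this
  have c2 : ConvexOn ℝ Set.univ (fun t : ℝ => max (-t - c) 0 ^ 2) := by
    have := hrelu.comp_affineMap
      ((-1 : ℝ) • AffineMap.id ℝ ℝ - AffineMap.const ℝ ℝ c)
    simpa [Function.comp_def, Pi.sub_apply, Pi.neg_apply] using this
  exact c1.add c2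

lemma softThresh_st {n : ℕ} (lam : ℝ) (z v : Fin n → ℝ) (i : Fin n) :
    Real.sign (z i) * max (|z i| - lam * v i) 0 = st (lam * v i) (z i) := rfl



/-- The componentwise soft-thresholding operator
`S_λ(z, v)ᵢ = sign(zᵢ) · max{|zᵢ| − λvᵢ, 0}`. -/
noncomputable def softThresh {n : ℕ} (lam : ℝ) (z v : Fin n → ℝ) : Fin n → ℝ :=
  fun i => Real.sign (z i) * max (|z i| - lam * v i) 0

/-- The dual objective
`Φ(y) = bᵀy + (1/(2β))‖y‖² + (1/(2λ))‖S_λ(x̄ − λAᵀy, v)‖²` on Euclidean space `ℝᵐ`. -/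
noncomputable def Phi {m n : ℕ} (A : Matrix (Fin m) (Fin n) ℝ) (b : Fin m → ℝ)
    (v xbar : Fin n → ℝ) (β lam : ℝ) (y : EuclideanSpace ℝ (Fin m)) : ℝ :=
  (∑ j, b j * y j) + (1 / (2 * β)) * (∑ j, y j ^ 2) +
    (1 / (2 * lam)) *
      ∑ i, softThresh lam (fun i' => xbar i' - lam * ∑ j, A j i' * y j) v i ^ 2

/-- The claimed gradient `∇Φ(y) = b + β⁻¹y − A·S_λ(x̄ − λAᵀy, v)`. -/
noncomputable def PhiGrad {m n : ℕ} (A : Matrix (Fin m) (Fin n) ℝ) (b : Fin m → ℝ)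
    (v xbar : Fin n → ℝ) (β lam : ℝ) (y : EuclideanSpace ℝ (Fin m)) :
    EuclideanSpace ℝ (Fin m) :=
  (WithLp.equiv 2 (Fin m → ℝ)).symm fun j =>
    b j + β⁻¹ * y j -
      ∑ i, A j i * softThresh lam (fun i' => xbar i' - lam * ∑ j', A j' i' * y j') v i

set_option maxHeartbeats 2000000 in
/-- `Φ` is convex and continuously differentiable on `ℝᵐ` with gradient
`∇Φ(y) = b + β⁻¹y − A·S_λ(x̄ − λAᵀy, v)`, and `∇Φ` is Lipschitz continuous. -/
theorem Phi_convex_differentiable_lipschitz {m n : ℕ} (A : Matrix (Fin m) (Fin n) ℝ)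
    (b : Fin m → ℝ) (v : Fin n → ℝ) (hv : ∀ i, 0 ≤ v i)
    (β : ℝ) (hβ : 0 < β) (lam : ℝ) (hlam : 0 < lam) (xbar : Fin n → ℝ) :
    ConvexOn ℝ Set.univ (Phi A b v xbar β lam) ∧
    (∀ y : EuclideanSpace ℝ (Fin m),
      HasGradientAt (Phi A b v xbar β lam) (PhiGrad A b v xbar β lam y) y) ∧
    (∃ K : NNReal, LipschitzWith K (PhiGrad A b v xbar β lam)) := by
  have hc : ∀ i, 0 ≤ lam * v i := fun i => mul_nonneg hlam.le (hv i)
  -- Phi in terms of st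
  have hPhi : Phi A b v xbar β lam = fun y =>
      (∑ j, b j * y j) + (1 / (2 * β)) * (∑ j, y j ^ 2) +
        (1 / (2 * lam)) *
          ∑ i, st (lam * v i) (xbar i - lam * ∑ j, A j i * y j) ^ 2 := rfl
  refine ⟨?_, ?_, ?_⟩
  · -- convexity
    rw [hPhi]
    refine ⟨convex_univ, fun x _ y _ a a' ha ha' haa => ?_⟩
    have happ : ∀ j, (a • x + a' • y) j = a * x j + a' * y j := fun j => by
      simp [PiLp.add_apply, PiLp.smul_apply]
    simp only [smul_eq_mul, happ]
    have h1 : ∑ j, b j * (a * x j + a' * y j)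
        = a * ∑ j, b j * x j + a' * ∑ j, b j * y j := by
      rw [Finset.mul_sum, Finset.mul_sum, ← Finset.sum_add_distrib]
      exact Finset.sum_congr rfl fun j _ => by ring
    have h2 : ∑ j, (a * x j + a' * y j) ^ 2
        ≤ a * ∑ j, x j ^ 2 + a' * ∑ j, y j ^ 2 := by
      rw [Finset.mul_sum, Finset.mul_sum, ← Finset.sum_add_distrib]
      refine Finset.sum_le_sum fun j _ => ?_
      nlinarith [sq_nonneg (x j - y j), mul_nonneg ha ha']
    have h3 : ∑ i, st (lam * v i) (xbar i - lam * ∑ j, A j i * (a * x j + a' * y j)) ^ 2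
        ≤ a * ∑ i, st (lam * v i) (xbar i - lam * ∑ j, A j i * x j) ^ 2
          + a' * ∑ i, st (lam * v i) (xbar i - lam * ∑ j, A j i * y j) ^ 2 := by
      rw [Finset.mul_sum, Finset.mul_sum, ← Finset.sum_add_distrib]
      refine Finset.sum_le_sum fun i _ => ?_
      have harg : xbar i - lam * ∑ j, A j i * (a * x j + a' * y j)
          = a * (xbar i - lam * ∑ j, A j i * x j) + a' * (xbar i - lam * ∑ j, A j i * y j) := by
        have : ∑ j, A j i * (a * x j + a' * y j)
            = a * ∑ j, A j i * x j + a' * ∑ j, A j i * y j := by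
          rw [Finset.mul_sum, Finset.mul_sum, ← Finset.sum_add_distrib]
          exact Finset.sum_congr rfl fun j _ => by ring
        rw [this]
        have hb1 : xbar i = (a + a') * xbar i := by rw [haa]; ring
        nlinarith [hb1]
      rw [harg]
      have := (st_sq_convex (hc i)).2 (Set.mem_univ (xbar i - lam * ∑ j, A j i * x j))
        (Set.mem_univ (xbar i - lam * ∑ j, A j i * y j)) ha ha' haa
      simpa using this
    have hb2 : (0:ℝ) ≤ 1 / (2 * β) := by positivity
    have hl2 : (0:ℝ) ≤ 1 / (2 * lam) := by positivity
    have := add_le_add (add_le_add h1.le (mul_le_mul_of_nonneg_left h2 hb2))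
      (mul_le_mul_of_nonneg_left h3 hl2)
    calc _ ≤ _ := this
      _ = _ := by ring
  · -- gradient
    intro y
    rw [hasGradientAt_iff_hasFDerivAt]
    have hproj : ∀ j, HasFDerivAt (fun z : EuclideanSpace ℝ (Fin m) => z j)
        (EuclideanSpace.proj j : EuclideanSpace ℝ (Fin m) →L[ℝ] ℝ) y := fun j => by
      have := (EuclideanSpace.proj (𝕜 := ℝ) j).hasFDerivAt (x := y)
      simpa using this
    have h1 : HasFDerivAt (fun z : EuclideanSpace ℝ (Fin m) => ∑ j, b j * z j)
        (∑ j, b j • (EuclideanSpace.proj j : EuclideanSpace ℝ (Fin m) →L[ℝ] ℝ)) y :=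
      HasFDerivAt.fun_sum fun j _ => (hproj j).const_mul (b j)
    have h2 : HasFDerivAt (fun z : EuclideanSpace ℝ (Fin m) => (1/(2*β)) * ∑ j, z j ^ 2)
        ((1/(2*β)) • ∑ j, (2 * y j) •
          (EuclideanSpace.proj j : EuclideanSpace ℝ (Fin m) →L[ℝ] ℝ)) y :=
      by
      refine HasFDerivAt.const_mul (HasFDerivAt.fun_sum fun j _ => ?_) _
      have := (hproj j).mul (hproj j)
      convert this using 1
      · rfl
      · funext z; simp only [Pi.mul_apply]; ring
      · ext w; simp [two_mul, add_smul]
    have h3 : HasFDerivAt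
        (fun z : EuclideanSpace ℝ (Fin m) =>
          (1/(2*lam)) * ∑ i, st (lam * v i) (xbar i - lam * ∑ j, A j i * z j) ^ 2)
        ((1/(2*lam)) • ∑ i, (2 * st (lam * v i) (xbar i - lam * ∑ j, A j i * y j)) •
          (-(lam • ∑ j, A j i • (EuclideanSpace.proj j : EuclideanSpace ℝ (Fin m) →L[ℝ] ℝ)))) y := by
      refine HasFDerivAt.const_mul (HasFDerivAt.fun_sum fun i _ => ?_) _
      have hsum : HasFDerivAt (fun z : EuclideanSpace ℝ (Fin m) => ∑ j, A j i * z j)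
          (∑ j, A j i • (EuclideanSpace.proj j : EuclideanSpace ℝ (Fin m) →L[ℝ] ℝ)) y :=
        HasFDerivAt.fun_sum fun j _ => (hproj j).const_mul (A j i)
      have hlin : HasFDerivAt (fun z : EuclideanSpace ℝ (Fin m) => xbar i - lam * ∑ j, A j i * z j)
          (-(lam • ∑ j, A j i • (EuclideanSpace.proj j : EuclideanSpace ℝ (Fin m) →L[ℝ] ℝ))) y :=
        (hsum.const_mul lam).const_sub (xbar i)
      have hst := (st_sq_deriv (hc i) (xbar i - lam * ∑ j, A j i * y j)).comp_hasFDerivAt y hlin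
      simpa [Function.comp_def] using hst
    have htot := (h1.add h2).add h3
    have hEq : (InnerProductSpace.toDual ℝ (EuclideanSpace ℝ (Fin m))
        (PhiGrad A b v xbar β lam y)) =
        (∑ j, b j • (EuclideanSpace.proj j : EuclideanSpace ℝ (Fin m) →L[ℝ] ℝ))
        + (1/(2*β)) • ∑ j, (2 * y j) •
          (EuclideanSpace.proj j : EuclideanSpace ℝ (Fin m) →L[ℝ] ℝ)
        + (1/(2*lam)) • ∑ i, (2 * st (lam * v i) (xbar i - lam * ∑ j, A j i * y j)) •
          (-(lam • ∑ j, A j i • (EuclideanSpace.proj j : EuclideanSpace ℝ (Fin m) →L[ℝ] ℝ))) := by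
      ext z
      simp only [InnerProductSpace.toDual_apply_apply, PiLp.inner_apply, RCLike.inner_apply,
        conj_trivial, ContinuousLinearMap.add_apply, ContinuousLinearMap.coe_sum',
        Finset.sum_apply, ContinuousLinearMap.coe_smul', Pi.smul_apply,
        ContinuousLinearMap.neg_apply, smul_eq_mul, PiLp.proj_apply,
        PhiGrad, WithLp.equiv_symm_apply, PiLp.toLp_apply]
      simp only [show softThresh lam (fun i' => xbar i' - lam * ∑ j', A j' i' * y j') v
        = fun i => st (lam * v i) (xbar i - lam * ∑ j', A j' i * y j') from rfl]
      have expand : ∀ j, (b j + β⁻¹ * y j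
            - ∑ i, A j i * st (lam * v i) (xbar i - lam * ∑ j', A j' i * y j')) * z j
          = b j * z j + β⁻¹ * y j * z j
            - ∑ i, A j i * st (lam * v i) (xbar i - lam * ∑ j', A j' i * y j') * z j :=
        fun j => by rw [sub_mul, add_mul, Finset.sum_mul]
      conv_lhs => enter [2, j]; rw [mul_comm]
      rw [Finset.sum_congr rfl (fun j _ => expand j), Finset.sum_sub_distrib,
        Finset.sum_add_distrib]
      have e2 : ∑ j, β⁻¹ * y j * z j = 1/(2*β) * ∑ j, 2 * y j * z j := by
        rw [Finset.mul_sum]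
        refine Finset.sum_congr rfl fun j _ => ?_
        field_simp
      have hterm : ∀ i : Fin n, ∑ j, A j i * st (lam * v i) (xbar i - lam * ∑ j', A j' i * y j') * z j
          = -(1/(2*lam) * (2 * st (lam * v i) (xbar i - lam * ∑ j', A j' i * y j')
              * -(lam * ∑ j', A j' i * z j'))) := by
        intro i
        calc ∑ j, A j i * st (lam * v i) (xbar i - lam * ∑ j', A j' i * y j') * z j
            = ∑ j, st (lam * v i) (xbar i - lam * ∑ j', A j' i * y j') * (A j i * z j) :=
              Finset.sum_congr rfl fun j _ => by ring
          _ = st (lam * v i) (xbar i - lam * ∑ j', A j' i * y j') * ∑ j, A j i * z j :=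
              (Finset.mul_sum _ _ _).symm
          _ = _ := by field_simp
      have e3 : ∑ j, ∑ i, A j i * st (lam * v i) (xbar i - lam * ∑ j', A j' i * y j') * z j
          = -(1/(2*lam) * ∑ i, 2 * st (lam * v i) (xbar i - lam * ∑ j', A j' i * y j')
              * -(lam * ∑ j', A j' i * z j')) := by
        calc ∑ j, ∑ i, A j i * st (lam * v i) (xbar i - lam * ∑ j', A j' i * y j') * z j
            = ∑ i : Fin n, ∑ j, A j i * st (lam * v i) (xbar i - lam * ∑ j', A j' i * y j') * z j :=
              Finset.sum_comm
          _ = ∑ i : Fin n, -(1/(2*lam) * (2 * st (lam * v i) (xbar i - lam * ∑ j', A j' i * y j')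
              * -(lam * ∑ j', A j' i * z j'))) := Finset.sum_congr rfl fun i _ => hterm i
          _ = -(∑ i : Fin n, 1/(2*lam) * (2 * st (lam * v i) (xbar i - lam * ∑ j', A j' i * y j')
              * -(lam * ∑ j', A j' i * z j'))) := by rw [Finset.sum_neg_distrib]
          _ = _ := by rw [← (Finset.mul_sum Finset.univ (fun i => 2 * st (lam * v i)
              (xbar i - lam * ∑ j', A j' i * y j') * -(lam * ∑ j', A j' i * z j')) (1/(2*lam)))]
      rw [e2, e3]
      ring
    rw [hEq]
    exact htot
  · -- Lipschitz
    set T : EuclideanSpace ℝ (Fin n) → EuclideanSpace ℝ (Fin n) :=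
      fun zz => (WithLp.equiv 2 (Fin n → ℝ)).symm fun i => st (lam * v i) (zz i) with hTdef
    have hTlip : LipschitzWith 1 T := by
      refine LipschitzWith.of_dist_le_mul fun x y => ?_
      rw [NNReal.coe_one, one_mul, EuclideanSpace.dist_eq, EuclideanSpace.dist_eq]
      apply Real.sqrt_le_sqrt
      refine Finset.sum_le_sum fun i _ => ?_
      have hTx : T x i = st (lam * v i) (x i) := rfl
      have hTy : T y i = st (lam * v i) (y i) := rfl
      rw [hTx, hTy, Real.dist_eq, Real.dist_eq]
      have h1 := st_lip (hc i) (x i) (y i)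
      have h2 : (0:ℝ) ≤ |st (lam * v i) (x i) - st (lam * v i) (y i)| := abs_nonneg _
      nlinarith
    set MA : EuclideanSpace ℝ (Fin n) →L[ℝ] EuclideanSpace ℝ (Fin m) :=
      LinearMap.toContinuousLinearMap (Matrix.toEuclideanLin A) with hMAdef
    set MT : EuclideanSpace ℝ (Fin m) →L[ℝ] EuclideanSpace ℝ (Fin n) :=
      LinearMap.toContinuousLinearMap (Matrix.toEuclideanLin A.transpose) with hMTdef
    have hrepr : PhiGrad A b v xbar β lam = fun y =>
        ((WithLp.equiv 2 (Fin m → ℝ)).symm b + β⁻¹ • y) -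
          MA (T ((WithLp.equiv 2 (Fin n → ℝ)).symm xbar - lam • MT y)) := by
      funext y
      ext j
      have hMT : ∀ i, (MT y) i = ∑ j', A j' i * y j' := by
        intro i
        rw [hMTdef]
        simp only [LinearMap.coe_toContinuousLinearMap', Matrix.toEuclideanLin_apply,
          WithLp.equiv_symm_apply, PiLp.toLp_apply, Matrix.mulVec, dotProduct,
          Matrix.transpose_apply, PiLp.toLp_apply]
      have harg : ∀ i, ((WithLp.equiv 2 (Fin n → ℝ)).symm xbar - lam • MT y) i
          = xbar i - lam * ∑ j', A j' i * y j' := by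
        intro i
        rw [PiLp.sub_apply, PiLp.smul_apply, WithLp.equiv_symm_apply, PiLp.toLp_apply, hMT i, smul_eq_mul]
      have hT2 : ∀ i, T ((WithLp.equiv 2 (Fin n → ℝ)).symm xbar - lam • MT y) i
          = st (lam * v i) (xbar i - lam * ∑ j', A j' i * y j') := by
        intro i
        have : T ((WithLp.equiv 2 (Fin n → ℝ)).symm xbar - lam • MT y) i
            = st (lam * v i) (((WithLp.equiv 2 (Fin n → ℝ)).symm xbar - lam • MT y) i) := rfl
        rw [this, harg i]
      have hMA : MA (T ((WithLp.equiv 2 (Fin n → ℝ)).symm xbar - lam • MT y)) j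
          = ∑ i, A j i * st (lam * v i) (xbar i - lam * ∑ j', A j' i * y j') := by
        have : MA (T ((WithLp.equiv 2 (Fin n → ℝ)).symm xbar - lam • MT y)) j
            = ∑ i, A j i * (T ((WithLp.equiv 2 (Fin n → ℝ)).symm xbar - lam • MT y)) i := by
          rw [hMAdef]
          simp only [LinearMap.coe_toContinuousLinearMap', Matrix.toEuclideanLin_apply,
            WithLp.equiv_symm_apply, PiLp.toLp_apply, Matrix.mulVec, dotProduct,
            PiLp.toLp_apply]
        rw [this]
        exact Finset.sum_congr rfl fun i _ => by rw [hT2 i]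
      have hlhs : PhiGrad A b v xbar β lam y j
          = b j + β⁻¹ * y j - ∑ i, A j i *
            st (lam * v i) (xbar i - lam * ∑ j', A j' i * y j') := rfl
      have hrhs : (((WithLp.equiv 2 (Fin m → ℝ)).symm b + β⁻¹ • y) -
          MA (T ((WithLp.equiv 2 (Fin n → ℝ)).symm xbar - lam • MT y))) j
          = (b j + β⁻¹ * y j) -
            MA (T ((WithLp.equiv 2 (Fin n → ℝ)).symm xbar - lam • MT y)) j := by
        rw [PiLp.sub_apply, PiLp.add_apply, PiLp.smul_apply, WithLp.equiv_symm_apply, PiLp.toLp_apply,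
          smul_eq_mul]
      rw [hlhs, hrhs, hMA]
    rw [hrepr]
    refine ⟨(0 + ‖β⁻¹‖₊) + (‖MA‖₊ * (1 * (0 + ‖lam • MT‖₊))), ?_⟩
    have hf : LipschitzWith (0 + ‖β⁻¹‖₊)
        (fun y : EuclideanSpace ℝ (Fin m) => (WithLp.equiv 2 (Fin m → ℝ)).symm b + β⁻¹ • y) :=
      (LipschitzWith.const _).add (lipschitzWith_smul β⁻¹)
    have hinner : LipschitzWith (0 + ‖lam • MT‖₊)
        (fun y : EuclideanSpace ℝ (Fin m) =>
          (WithLp.equiv 2 (Fin n → ℝ)).symm xbar - lam • MT y) :=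
      (LipschitzWith.const _).sub (lam • MT).lipschitz
    have hg : LipschitzWith (‖MA‖₊ * (1 * (0 + ‖lam • MT‖₊)))
        (fun y : EuclideanSpace ℝ (Fin m) =>
          MA (T ((WithLp.equiv 2 (Fin n → ℝ)).symm xbar - lam • MT y))) :=
      MA.lipschitz.comp (hTlip.comp hinner)
    exact hf.sub hg
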